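/- Let G be a d-sphere with d >= 2 and let H be obtained from G by an edge subdivision at an edge e = (a,b). Then H is again a d-sphere, H is homotopic to G, and G can be recovered from H by an edge collapse. -/

import Mathlib

universe u

open SimpleGraph

/-- A graph is contractible if it is a one-point graph, or if it has a vertex `x`
such that both the unit sphere `S(x)` and the graph with `x` deleted are contractible. -/
inductive GraphContractible : ∀ {V : Type u}, SimpleGraph V → Prop
  | point {V : Type u} (G : SimpleGraph V) (h1 : Nonempty V) (h2 : Subsingleton V) :
      GraphContractible G
  | step {V : Type u} (G : SimpleGraph V) (x : V)
      (hS : GraphContractible (G.induce (G.neighborSet x)))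
      (hD : GraphContractible (G.induce {y : V | y ≠ x})) :
      GraphContractible G

/-- `IsSphere d G` : `G` is a `d`-sphere.  The empty graph is the `(-1)`-sphere;
for `d ≥ 0`, a `d`-sphere is a nonempty graph all of whose unit spheres are
`(d-1)`-spheres and such that deleting some vertex leaves a contractible graph. -/
inductive IsSphere : ℤ → ∀ {V : Type u}, SimpleGraph V → Prop
  | empty {V : Type u} (G : SimpleGraph V) (h : IsEmpty V) : IsSphere (-1) G
  | step {d : ℤ} (hd : 0 ≤ d) {V : Type u} (G : SimpleGraph V) (hne : Nonempty V)
      (hS : ∀ x : V, IsSphere (d - 1) (G.induce (G.neighborSet x)))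
      (hx : ∃ x : V, GraphContractible (G.induce {y : V | y ≠ x})) :
      IsSphere d G

/-- Edge subdivision at the edge `(a, b)`: delete the edge, add a new vertex (`none`)
joined to `a`, to `b`, and to every common neighbor of `a` and `b`. -/
def edgeSubdivision {V : Type u} (G : SimpleGraph V) (a b : V) : SimpleGraph (Option V) where
  Adj u v :=
    match u, v with
    | some x, some y => G.Adj x y ∧ ¬((x = a ∧ y = b) ∨ (x = b ∧ y = a))
    | some x, none => x = a ∨ x = b ∨ (G.Adj a x ∧ G.Adj b x)
    | none, some y => y = a ∨ y = b ∨ (G.Adj a y ∧ G.Adj b y)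
    | none, none => False
  symm := by
    constructor
    rintro (_ | x) (_ | y) h
    · exact h
    · exact h
    · exact h
    · exact ⟨h.1.symm, fun hc => h.2 (hc.elim (fun hh => Or.inr ⟨hh.2, hh.1⟩)
        (fun hh => Or.inl ⟨hh.2, hh.1⟩))⟩
  loopless := by
    constructor
    rintro (_ | x) h
    · exact h
    · exact G.loopless.irrefl x h.1

/-- Edge collapse at `(a, b)`: identify `a` and `b` to a single vertex (kept as `a`),
adjacent to every former neighbor of `a` or of `b`. -/
def edgeCollapse {V : Type u} (G : SimpleGraph V) (a b : V) :
    SimpleGraph {v : V // v ≠ b} where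
  Adj u v := u ≠ v ∧ (G.Adj u.1 v.1 ∨ (u.1 = a ∧ G.Adj b v.1) ∨ (v.1 = a ∧ G.Adj b u.1))
  symm := by
    constructor
    rintro u v ⟨h1, h2⟩
    exact ⟨h1.symm, h2.elim (fun h => Or.inl h.symm)
      (fun h => h.elim (fun h => Or.inr (Or.inr h)) (fun h => Or.inr (Or.inl h)))⟩
  loopless := by constructor; rintro u ⟨h, _⟩; exact h rfl

/-- Adding a cone vertex (`none`) joined to all vertices of the set `A`. -/
def addCone {V : Type u} (G : SimpleGraph V) (A : Set V) : SimpleGraph (Option V) where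
  Adj u v :=
    match u, v with
    | some x, some y => G.Adj x y
    | some x, none => x ∈ A
    | none, some y => y ∈ A
    | none, none => False
  symm := by
    constructor
    rintro (_ | x) (_ | y) h
    · exact h
    · exact h
    · exact h
    · exact h.symm
  loopless := by
    constructor
    rintro (_ | x) h
    · exact h
    · exact G.loopless.irrefl x h

/-- Two graphs are homotopic if one can be obtained from the other, up to isomorphism,
by a finite sequence of steps each of which adds a new vertex joined to all vertices of a
contractible subgraph, or removes such a vertex (i.e. a vertex whose unit sphere is
contractible). -/
inductive Homotopic : ∀ {V : Type u}, SimpleGraph V → ∀ {W : Type u}, SimpleGraph W → Prop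
  | of_iso {V W : Type u} (G : SimpleGraph V) (H : SimpleGraph W)
      (h : Nonempty (G ≃g H)) : Homotopic G H
  | expand {V : Type u} (G : SimpleGraph V) (A : Set V)
      (h : GraphContractible (G.induce A)) : Homotopic G (addCone G A)
  | symm {V W : Type u} (G : SimpleGraph V) (H : SimpleGraph W) :
      Homotopic G H → Homotopic H G
  | trans {U V W : Type u} (F : SimpleGraph U) (G : SimpleGraph V) (H : SimpleGraph W) :
      Homotopic F G → Homotopic G H → Homotopic F H


section Helpers

instance {α : Type u} [Finite α] : Finite (Option α) :=
  Finite.of_equiv _ (Equiv.optionEquivSumPUnit.{u,u} α).symm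

variable {V W : Type u}

/-- Build a graph isomorphism between induced subgraphs from an ambient isomorphism. -/
def isoInduce {G : SimpleGraph V} {H : SimpleGraph W} (e : G ≃g H) (A : Set V) (B : Set W)
    (hmem : ∀ v, v ∈ A ↔ (e v : W) ∈ B) : G.induce A ≃g H.induce B where
  toEquiv := Equiv.subtypeEquiv e.toEquiv hmem
  map_rel_iff' := by
    intro u v
    simp only [Equiv.subtypeEquiv_apply]
    exact e.map_adj_iff

/-- Contractibility is invariant under graph isomorphism. -/
theorem contractible_of_iso : ∀ {V : Type u} {G : SimpleGraph V}, GraphContractible G →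
    ∀ {W : Type u} {H : SimpleGraph W}, (G ≃g H) → GraphContractible H := by
  intro V G h
  induction h with
  | point G h1 h2 =>
    intro W H e
    exact GraphContractible.point H ⟨e h1.some⟩
      ⟨fun x y => by
        have := h2.allEq (e.symm x) (e.symm y)
        have : e (e.symm x) = e (e.symm y) := congrArg e this
        simpa using this⟩
  | step G x hS hD ihS ihD =>
    intro W H e
    refine GraphContractible.step H (e x) (ihS (isoInduce e _ _ fun v => ?_))
      (ihD (isoInduce e _ _ fun v => ?_))
    · simp only [SimpleGraph.mem_neighborSet]
      constructor
      · intro hadj; exact e.map_adj_iff.2 hadj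
      · intro hadj; exact e.map_adj_iff.1 hadj
    · simp only [Set.mem_setOf_eq, ne_eq]
      constructor
      · intro hv hc; exact hv (by simpa using congrArg e.symm hc)
      · intro hv hc; exact hv (congrArg e hc)

/-- Sphere-ness is invariant under graph isomorphism. -/
theorem isSphere_of_iso : ∀ {d : ℤ} {V : Type u} {G : SimpleGraph V}, IsSphere d G →
    ∀ {W : Type u} {H : SimpleGraph W}, (G ≃g H) → IsSphere d H := by
  intro d V G h
  induction h with
  | empty G he =>
    intro W H e
    exact IsSphere.empty H ⟨fun w => he.elim (e.symm w)⟩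
  | step hd G hne hS hx ihS =>
    intro W H e
    refine IsSphere.step hd H (hne.map e) (fun w => ?_) ?_
    · refine ihS (e.symm w) (isoInduce e _ _ fun v => ?_)
      simp only [SimpleGraph.mem_neighborSet]
      constructor
      · intro hadj
        have := e.map_adj_iff.2 hadj
        simpa using this
      · intro hadj
        have : G.Adj (e.symm (e (e.symm w))) (e.symm (e v)) := e.symm.map_adj_iff.2 (by simpa using hadj)
        simpa using this
    · obtain ⟨x, hc⟩ := hx
      refine ⟨e x, contractible_of_iso hc (isoInduce e _ _ fun v => ?_)⟩
      simp only [Set.mem_setOf_eq, ne_eq]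
      constructor
      · intro hv hc'; exact hv (by simpa using congrArg e.symm hc')
      · intro hv hc'; exact hv (congrArg e hc')

/-- A finite graph with a universal vertex is contractible. -/
theorem contractible_of_universal : ∀ (n : ℕ) {V : Type u} [Finite V] (G : SimpleGraph V)
    (v : V), Nat.card V ≤ n → (∀ w, w ≠ v → G.Adj v w) → GraphContractible G := by
  intro n
  induction n with
  | zero =>
    intro V _ G v hcard _
    have : 0 < Nat.card V := Nat.card_pos_iff.2 ⟨⟨v⟩, inferInstance⟩
    omega
  | succ n ih =>
    intro V _ G v hcard huniv
    by_cases hsub : ∀ w : V, w = v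
    · exact GraphContractible.point G ⟨v⟩ ⟨fun x y => (hsub x).trans (hsub y).symm⟩
    · push_neg at hsub
      obtain ⟨w, hw⟩ := hsub
      haveI := Fintype.ofFinite V
      classical
      have hcard' : ∀ (p : V → Prop), ¬ p w → Nat.card {x // p x} ≤ n := by
        intro p hp
        have h1 : Nat.card {x // p x} < Nat.card V := by
          simp only [Nat.card_eq_fintype_card]
          exact Fintype.card_subtype_lt hp
        omega
      refine GraphContractible.step G w ?_ ?_
      · -- unit sphere of w contains v and v is universal in it
        have hv : v ∈ G.neighborSet w := (G.adj_symm (huniv w hw))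
        refine ih _ ⟨v, hv⟩ (hcard' _ (by simp [SimpleGraph.mem_neighborSet])) ?_
        rintro ⟨u, hu⟩ hne
        have huv : u ≠ v := fun hc => hne (Subtype.ext hc)
        exact huniv u huv
      · have hv : v ∈ {y : V | y ≠ w} := hw.symm
        refine ih _ ⟨v, hv⟩ (hcard' _ (by simp)) ?_
        rintro ⟨u, hu⟩ hne
        have huv : u ≠ v := fun hc => hne (Subtype.ext hc)
        exact huniv u huv

theorem contractible_of_universal' {V : Type u} [Finite V] (G : SimpleGraph V)
    (v : V) (huniv : ∀ w, w ≠ v → G.Adj v w) : GraphContractible G :=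
  contractible_of_universal (Nat.card V) G v le_rfl huniv

/-- The unit sphere of any vertex of a `d`-sphere is a `(d-1)`-sphere. -/
theorem sphere_unitSphere {d : ℤ} {V : Type u} {G : SimpleGraph V} (h : IsSphere d G)
    (x : V) : IsSphere (d - 1) (G.induce (G.neighborSet x)) := by
  cases h with
  | empty _ he => exact (he.elim x)
  | step hd G hne hS hx => exact hS x

end Helpers

section Susp

variable {W : Type u}

/-- Suspension: two non-adjacent apexes (`none` and `some none`) joined to all of `J`. -/
def susp (J : SimpleGraph W) : SimpleGraph (Option (Option W)) where
  Adj u v :=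
    match u, v with
    | some (some x), some (some y) => J.Adj x y
    | some (some _), none => True
    | none, some (some _) => True
    | some (some _), some none => True
    | some none, some (some _) => True
    | _, _ => False
  symm := by
    constructor
    rintro (_ | (_ | x)) (_ | (_ | y)) h <;> first | trivial | exact h.symm
  loopless := by
    constructor
    rintro (_ | (_ | x)) h
    · exact h
    · exact h
    · exact J.loopless.irrefl x h

lemma susp_adj_ss {J : SimpleGraph W} {x y : W} :
    (susp J).Adj (some (some x)) (some (some y)) ↔ J.Adj x y := Iff.rfl

/-- The suspension of a `d`-sphere is a `(d+1)`-sphere. -/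
theorem isSphere_susp : ∀ {k : ℤ} {W : Type u} {J : SimpleGraph W}, IsSphere k J →
    Finite W → IsSphere (k + 1) (susp J) := by
  intro k W J h
  induction h with
  | @empty W J he =>
    intro hfin
    haveI : Finite W := hfin
    refine IsSphere.step (by norm_num) _ ⟨none⟩ (fun x => ?_) ?_
    · have hempty : ∀ z : Option (Option W), IsEmpty ((susp J).neighborSet z) := by
        intro z
        constructor
        rintro ⟨(_ | (_ | y)), hy⟩
        · cases z with
          | none => exact hy
          | some z' => cases z' with
            | none => exact hy
            | some w => exact he.elim w
        · cases z with
          | none => exact hy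
          | some z' => cases z' with
            | none => exact hy
            | some w => exact he.elim w
        · exact he.elim y
      have : (-1 : ℤ) + 1 - 1 = -1 := by ring
      rw [this]
      exact IsSphere.empty _ (hempty x)
    · refine ⟨none, contractible_of_universal' _ ⟨some none, by simp⟩ ?_⟩
      rintro ⟨(_ | (_ | w)), hw⟩ hne
      · exact absurd rfl hw
      · exact absurd (Subtype.ext rfl) hne
      · exact (he.false w).elim
  | @step k' hd W J hne hS hx ihS =>
    intro hfin
    haveI : Finite W := hfin
    have hJ : IsSphere _ J := IsSphere.step hd J hne hS hx
    refine IsSphere.step (by omega) _ ⟨none⟩ (fun x => ?_) ?_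
    · have heq : ∀ (k : ℤ), k + 1 - 1 = k := fun k => by ring
      rw [heq]
      match x with
      | none =>
        -- sphere of apex ≃ J
        refine isSphere_of_iso hJ ⟨?_, ?_⟩
        · refine ⟨fun w => ⟨some (some w), trivial⟩, fun p => ?_, ?_, ?_⟩
          · obtain ⟨(_ | (_ | w)), hw⟩ := p
            · exact absurd hw (by simp [SimpleGraph.mem_neighborSet, susp])
            · exact absurd hw (by simp [SimpleGraph.mem_neighborSet, susp])
            · exact w
          · intro w; rfl
          · rintro ⟨(_ | (_ | w)), hw⟩
            · exact absurd hw (by simp [SimpleGraph.mem_neighborSet, susp])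
            · exact absurd hw (by simp [SimpleGraph.mem_neighborSet, susp])
            · rfl
        · intro u v; rfl
      | some none =>
        refine isSphere_of_iso hJ ⟨?_, ?_⟩
        · refine ⟨fun w => ⟨some (some w), trivial⟩, fun p => ?_, ?_, ?_⟩
          · obtain ⟨(_ | (_ | w)), hw⟩ := p
            · exact absurd hw (by simp [SimpleGraph.mem_neighborSet, susp])
            · exact absurd hw (by simp [SimpleGraph.mem_neighborSet, susp])
            · exact w
          · intro w; rfl
          · rintro ⟨(_ | (_ | w)), hw⟩
            · exact absurd hw (by simp [SimpleGraph.mem_neighborSet, susp])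
            · exact absurd hw (by simp [SimpleGraph.mem_neighborSet, susp])
            · rfl
        · intro u v; rfl
      | some (some w) =>
        -- sphere of a base vertex ≃ susp of its sphere in J
        have hkk : ∀ (k : ℤ), k - 1 + 1 = k := fun k => by ring
        have hsub : IsSphere _ (susp (J.induce (J.neighborSet w))) := ihS w inferInstance
        rw [hkk] at hsub
        refine isSphere_of_iso hsub ⟨?_, ?_⟩
        · refine ⟨fun p => ?_, fun p => ?_, ?_, ?_⟩
          · match p with
            | none => exact ⟨none, trivial⟩
            | some none => exact ⟨some none, trivial⟩
            | some (some ⟨u, hu⟩) => exact ⟨some (some u), hu⟩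
          · match p with
            | ⟨none, h⟩ => exact none
            | ⟨some none, h⟩ => exact some none
            | ⟨some (some u), h⟩ => exact some (some ⟨u, h⟩)
          · rintro (_ | (_ | ⟨u, hu⟩)) <;> rfl
          · rintro ⟨(_ | (_ | u)), h⟩ <;> rfl
        · rintro (_ | (_ | ⟨u, hu⟩)) (_ | (_ | ⟨v, hv⟩)) <;>
            exact Iff.rfl
    · refine ⟨none, ?_⟩
      -- deletion of an apex: other apex is universal
      refine contractible_of_universal' _ ⟨some none, by simp⟩ ?_
      rintro ⟨(_ | (_ | w)), hw⟩ hne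
      · exact absurd rfl hw
      · exact absurd (Subtype.ext rfl) hne
      · trivial

end Susp

section SubIsos

variable {V W : Type u}

/-- Helper to build a graph isomorphism from explicit data. -/
def mkIso {G : SimpleGraph V} {H : SimpleGraph W} (f : V → W) (g : W → V)
    (hgf : ∀ v, g (f v) = v) (hfg : ∀ w, f (g w) = w)
    (hadj : ∀ u v, G.Adj u v ↔ H.Adj (f u) (f v)) : G ≃g H where
  toFun := f
  invFun := g
  left_inv := hgf
  right_inv := hfg
  map_rel_iff' := by intro u v; exact (hadj u v).symm

variable {G : SimpleGraph V} {a b : V}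

lemma sub_ss {x y : V} : (edgeSubdivision G a b).Adj (some x) (some y) ↔
    G.Adj x y ∧ ¬((x = a ∧ y = b) ∨ (x = b ∧ y = a)) := Iff.rfl

lemma sub_sn {x : V} : (edgeSubdivision G a b).Adj (some x) none ↔
    x = a ∨ x = b ∨ (G.Adj a x ∧ G.Adj b x) := Iff.rfl

lemma sub_ns {y : V} : (edgeSubdivision G a b).Adj none (some y) ↔
    y = a ∨ y = b ∨ (G.Adj a y ∧ G.Adj b y) := Iff.rfl

/-- Subdivision is symmetric in the two endpoints. -/
def subSymm (G : SimpleGraph V) (a b : V) :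
    edgeSubdivision G a b ≃g edgeSubdivision G b a :=
  mkIso id id (fun _ => rfl) (fun _ => rfl) (by
    rintro (_ | x) (_ | y)
    · exact Iff.rfl
    · rw [id, id, sub_ns, sub_ns]; constructor <;> (rintro (h | h | h) <;> [skip; skip; skip] <;>
        first | exact Or.inr (Or.inl h) | exact Or.inl h | exact Or.inr (Or.inr ⟨h.2, h.1⟩))
    · rw [id, id, sub_sn, sub_sn]; constructor <;> (rintro (h | h | h) <;>
        first | exact Or.inr (Or.inl h) | exact Or.inl h | exact Or.inr (Or.inr ⟨h.2, h.1⟩))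
    · rw [id, id, sub_ss, sub_ss]; constructor <;> (rintro ⟨h1, h2⟩ <;>
        exact ⟨h1, fun hc => h2 (hc.elim (fun q => Or.inr q) (fun q => Or.inl q))⟩))

/-- The unit sphere of `a` in the subdivision is isomorphic to the unit sphere of `a` in `G`,
with `b` replaced by the new vertex. -/
noncomputable def isoSphereA (hab : G.Adj a b) :
    (edgeSubdivision G a b).induce ((edgeSubdivision G a b).neighborSet (some a)) ≃g
      G.induce (G.neighborSet a) := by
  classical
  have hne : a ≠ b := hab.ne
  refine mkIso (fun p => ?_) (fun q => ?_) ?_ ?_ ?_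
  · exact match p with
    | ⟨none, h⟩ => ⟨b, hab⟩
    | ⟨some c, h⟩ => ⟨c, h.1⟩
  · exact if hq : (q : V) = b then ⟨none, Or.inl rfl⟩ else
      ⟨some q, ⟨q.2, by
        rintro (⟨h1, h2⟩ | ⟨h1, h2⟩)
        · exact hq h2
        · exact hne h1⟩⟩
  · rintro ⟨(_ | c), h⟩
    · simp
    · have hcb : c ≠ b := by
        rintro rfl
        exact h.2 (Or.inl ⟨rfl, rfl⟩)
      simp [hcb]
  · rintro ⟨c, hc⟩
    by_cases hcb : c = b
    · subst hcb; simp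
    · simp [hcb]
  · rintro ⟨(_ | c), hc⟩ ⟨(_ | c'), hc'⟩
    · -- none, none
      constructor
      · intro h; exact ((h : False)).elim
      · intro h; exact absurd (h : G.Adj b b) (G.loopless.irrefl b)
    · -- none, some c'
      have h1 : c' ≠ b := by rintro rfl; exact hc'.2 (Or.inl ⟨rfl, rfl⟩)
      have h2 : G.Adj a c' := hc'.1
      constructor
      · intro h
        obtain (h | h | h) : c' = a ∨ c' = b ∨ (G.Adj a c' ∧ G.Adj b c') := h
        · exact absurd h.symm h2.ne
        · exact absurd h h1
        · exact (h.2 : G.Adj b c')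
      · intro h
        exact (Or.inr (Or.inr ⟨h2, (h : G.Adj b c')⟩) :
          c' = a ∨ c' = b ∨ (G.Adj a c' ∧ G.Adj b c'))
    · -- some c, none
      have h1 : c ≠ b := by rintro rfl; exact hc.2 (Or.inl ⟨rfl, rfl⟩)
      have h2 : G.Adj a c := hc.1
      constructor
      · intro h
        obtain (h | h | h) : c = a ∨ c = b ∨ (G.Adj a c ∧ G.Adj b c) := h
        · exact absurd h.symm h2.ne
        · exact absurd h h1
        · exact (h.2.symm : G.Adj c b)
      · intro h
        exact (Or.inr (Or.inr ⟨h2, (h : G.Adj c b).symm⟩) :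
          c = a ∨ c = b ∨ (G.Adj a c ∧ G.Adj b c))
    · -- some, some
      have h1 : c ≠ b := by rintro rfl; exact hc.2 (Or.inl ⟨rfl, rfl⟩)
      have h1' : c' ≠ b := by rintro rfl; exact hc'.2 (Or.inl ⟨rfl, rfl⟩)
      constructor
      · intro h
        exact ((h : G.Adj c c' ∧ _).1 : G.Adj c c')
      · intro h
        exact (⟨(h : G.Adj c c'), by
          rintro (⟨q1, q2⟩ | ⟨q1, q2⟩)
          · exact h1' q2
          · exact h1 q1⟩ : G.Adj c c' ∧ ¬((c = a ∧ c' = b) ∨ (c = b ∧ c' = a)))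

end SubIsos

section SubIsos2

variable {V : Type u} {G : SimpleGraph V} {a b : V}

/-- The unit sphere of a vertex `x ∉ {a,b}` which is not a common neighbor of `a` and `b`. -/
def isoSphereOther (x : V) (hxa : x ≠ a) (hxb : x ≠ b) (hxI : ¬(G.Adj a x ∧ G.Adj b x)) :
    (edgeSubdivision G a b).induce ((edgeSubdivision G a b).neighborSet (some x)) ≃g
      G.induce (G.neighborSet x) := by
  refine mkIso (fun p => ?_) (fun q => ?_) ?_ ?_ ?_
  · exact match p with
    | ⟨none, h⟩ => absurd (h : x = a ∨ x = b ∨ (G.Adj a x ∧ G.Adj b x))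
        (by rintro (h | h | h) <;> [exact hxa h; exact hxb h; exact hxI h])
    | ⟨some c, h⟩ => ⟨c, (h : G.Adj x c ∧ ¬(_ ∨ _)).1⟩
  · exact ⟨some q, ⟨q.2, by
      rintro (⟨h1, h2⟩ | ⟨h1, h2⟩)
      · exact hxa h1
      · exact hxb h1⟩⟩
  · rintro ⟨(_ | c), h⟩
    · exact absurd (h : x = a ∨ x = b ∨ (G.Adj a x ∧ G.Adj b x))
        (by rintro (h | h | h) <;> [exact hxa h; exact hxb h; exact hxI h])
    · rfl
  · rintro ⟨c, hc⟩; rfl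
  · rintro ⟨(_ | c), hc⟩ ⟨(_ | c'), hc'⟩
    · exact absurd (hc : x = a ∨ x = b ∨ (G.Adj a x ∧ G.Adj b x))
        (by rintro (h | h | h) <;> [exact hxa h; exact hxb h; exact hxI h])
    · exact absurd (hc : x = a ∨ x = b ∨ (G.Adj a x ∧ G.Adj b x))
        (by rintro (h | h | h) <;> [exact hxa h; exact hxb h; exact hxI h])
    · exact absurd (hc' : x = a ∨ x = b ∨ (G.Adj a x ∧ G.Adj b x))
        (by rintro (h | h | h) <;> [exact hxa h; exact hxb h; exact hxI h])
    · constructor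
      · intro h
        exact ((h : G.Adj c c' ∧ _).1 : G.Adj c c')
      · intro h
        refine (⟨(h : G.Adj c c'), ?_⟩ :
          G.Adj c c' ∧ ¬((c = a ∧ c' = b) ∨ (c = b ∧ c' = a)))
        have hxc : G.Adj x c := (hc : G.Adj x c ∧ ¬(_ ∨ _)).1
        have hxc' : G.Adj x c' := (hc' : G.Adj x c' ∧ ¬(_ ∨ _)).1
        rintro (⟨q1, q2⟩ | ⟨q1, q2⟩)
        · exact hxI ⟨q1 ▸ hxc.symm, q2 ▸ hxc'.symm⟩
        · exact hxI ⟨q2 ▸ hxc'.symm, q1 ▸ hxc.symm⟩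

/-- The unit sphere of a common neighbor `x` of `a` and `b` is the subdivision of its
old unit sphere. -/
def isoSphereI (x : V) (hax : G.Adj a x) (hbx : G.Adj b x) :
    (edgeSubdivision G a b).induce ((edgeSubdivision G a b).neighborSet (some x)) ≃g
      edgeSubdivision (G.induce (G.neighborSet x)) ⟨a, hax.symm⟩ ⟨b, hbx.symm⟩ := by
  have hxa : x ≠ a := fun hc => G.loopless.irrefl a (hc ▸ hax)
  have hxb : x ≠ b := fun hc => G.loopless.irrefl b (hc ▸ hbx)
  refine mkIso (fun p => ?_) (fun q => ?_) ?_ ?_ ?_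
  · exact match p with
    | ⟨none, h⟩ => none
    | ⟨some c, h⟩ => some ⟨c, (h : G.Adj x c ∧ _).1⟩
  · exact match q with
    | none => ⟨none, (Or.inr (Or.inr ⟨hax, hbx⟩) : x = a ∨ x = b ∨ (G.Adj a x ∧ G.Adj b x))⟩
    | some ⟨c, hc⟩ => ⟨some c, (⟨hc, by
        rintro (⟨h1, h2⟩ | ⟨h1, h2⟩)
        · exact hxa h1
        · exact hxb h1⟩ : G.Adj x c ∧ ¬((x = a ∧ c = b) ∨ (x = b ∧ c = a)))⟩
  · rintro ⟨(_ | c), h⟩ <;> rfl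
  · rintro (_ | ⟨c, hc⟩) <;> rfl
  · rintro ⟨(_ | c), hc⟩ ⟨(_ | c'), hc'⟩
    · exact Iff.rfl
    · -- none, some c' : both sides talk about the new vertex
      constructor
      · intro h
        obtain (h | h | h) : c' = a ∨ c' = b ∨ (G.Adj a c' ∧ G.Adj b c') := h
        · exact Or.inl (Subtype.ext h)
        · exact Or.inr (Or.inl (Subtype.ext h))
        · exact Or.inr (Or.inr ⟨(h.1 : G.Adj a c'), (h.2 : G.Adj b c')⟩)
      · intro h
        obtain (h | h | h) := (h : _ ∨ _ ∨ _)
        · exact Or.inl (congrArg Subtype.val h)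
        · exact Or.inr (Or.inl (congrArg Subtype.val h))
        · exact Or.inr (Or.inr ⟨(h.1 : G.Adj a c'), (h.2 : G.Adj b c')⟩)
    · -- some c, none
      constructor
      · intro h
        obtain (h | h | h) : c = a ∨ c = b ∨ (G.Adj a c ∧ G.Adj b c) := h
        · exact Or.inl (Subtype.ext h)
        · exact Or.inr (Or.inl (Subtype.ext h))
        · exact Or.inr (Or.inr ⟨(h.1 : G.Adj a c), (h.2 : G.Adj b c)⟩)
      · intro h
        obtain (h | h | h) := (h : _ ∨ _ ∨ _)
        · exact Or.inl (congrArg Subtype.val h)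
        · exact Or.inr (Or.inl (congrArg Subtype.val h))
        · exact Or.inr (Or.inr ⟨(h.1 : G.Adj a c), (h.2 : G.Adj b c)⟩)
    · -- some, some
      constructor
      · rintro ⟨h1, h2⟩
        refine ⟨(h1 : G.Adj c c'), ?_⟩
        rintro (⟨q1, q2⟩ | ⟨q1, q2⟩)
        · exact h2 (Or.inl ⟨congrArg Subtype.val q1, congrArg Subtype.val q2⟩)
        · exact h2 (Or.inr ⟨congrArg Subtype.val q1, congrArg Subtype.val q2⟩)
      · rintro ⟨h1, h2⟩
        refine ⟨(h1 : G.Adj c c'), ?_⟩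
        rintro (⟨q1, q2⟩ | ⟨q1, q2⟩)
        · exact h2 (Or.inl ⟨Subtype.ext q1, Subtype.ext q2⟩)
        · exact h2 (Or.inr ⟨Subtype.ext q1, Subtype.ext q2⟩)

/-- Deleting an old vertex `x ∉ {a, b}` from the subdivision gives the subdivision of the
deletion. -/
def isoDelete (x : V) (hax : a ≠ x) (hbx : b ≠ x) :
    (edgeSubdivision G a b).induce {y : Option V | y ≠ some x} ≃g
      edgeSubdivision (G.induce {y : V | y ≠ x}) ⟨a, hax⟩ ⟨b, hbx⟩ := by
  refine mkIso (fun p => ?_) (fun q => ?_) ?_ ?_ ?_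
  · exact match p with
    | ⟨none, h⟩ => none
    | ⟨some c, h⟩ => some ⟨c, fun hc => (h : some c ≠ some x) (congrArg some hc)⟩
  · exact match q with
    | none => ⟨none, fun hc => Option.some_ne_none _ hc.symm⟩
    | some ⟨c, hc⟩ => ⟨some c, fun h => hc (Option.some.inj h)⟩
  · rintro ⟨(_ | c), h⟩ <;> rfl
  · rintro (_ | ⟨c, hc⟩) <;> rfl
  · rintro ⟨(_ | c), hc⟩ ⟨(_ | c'), hc'⟩
    · exact Iff.rfl
    · constructor
      · intro h
        obtain (h | h | h) : c' = a ∨ c' = b ∨ (G.Adj a c' ∧ G.Adj b c') := h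
        · exact Or.inl (Subtype.ext h)
        · exact Or.inr (Or.inl (Subtype.ext h))
        · exact Or.inr (Or.inr ⟨(h.1 : G.Adj a c'), (h.2 : G.Adj b c')⟩)
      · intro h
        obtain (h | h | h) := (h : _ ∨ _ ∨ _)
        · exact Or.inl (congrArg Subtype.val h)
        · exact Or.inr (Or.inl (congrArg Subtype.val h))
        · exact Or.inr (Or.inr ⟨(h.1 : G.Adj a c'), (h.2 : G.Adj b c')⟩)
    · constructor
      · intro h
        obtain (h | h | h) : c = a ∨ c = b ∨ (G.Adj a c ∧ G.Adj b c) := h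
        · exact Or.inl (Subtype.ext h)
        · exact Or.inr (Or.inl (Subtype.ext h))
        · exact Or.inr (Or.inr ⟨(h.1 : G.Adj a c), (h.2 : G.Adj b c)⟩)
      · intro h
        obtain (h | h | h) := (h : _ ∨ _ ∨ _)
        · exact Or.inl (congrArg Subtype.val h)
        · exact Or.inr (Or.inl (congrArg Subtype.val h))
        · exact Or.inr (Or.inr ⟨(h.1 : G.Adj a c), (h.2 : G.Adj b c)⟩)
    · constructor
      · rintro ⟨h1, h2⟩
        refine ⟨(h1 : G.Adj c c'), ?_⟩
        rintro (⟨q1, q2⟩ | ⟨q1, q2⟩)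
        · exact h2 (Or.inl ⟨congrArg Subtype.val q1, congrArg Subtype.val q2⟩)
        · exact h2 (Or.inr ⟨congrArg Subtype.val q1, congrArg Subtype.val q2⟩)
      · rintro ⟨h1, h2⟩
        refine ⟨(h1 : G.Adj c c'), ?_⟩
        rintro (⟨q1, q2⟩ | ⟨q1, q2⟩)
        · exact h2 (Or.inl ⟨Subtype.ext q1, Subtype.ext q2⟩)
        · exact h2 (Or.inr ⟨Subtype.ext q1, Subtype.ext q2⟩)

end SubIsos2

section SubIsos3

variable {V : Type u} {G : SimpleGraph V} {a b : V}

/-- The unit sphere of `b` in the subdivision, via symmetry. -/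
noncomputable def isoSphereB (hab : G.Adj a b) :
    (edgeSubdivision G a b).induce ((edgeSubdivision G a b).neighborSet (some b)) ≃g
      G.induce (G.neighborSet b) :=
  (isoInduce (subSymm G a b) _ _ (fun v => by
    constructor
    · intro h
      exact (subSymm G a b).map_adj_iff.2 h
    · intro h
      exact (subSymm G a b).map_adj_iff.1 h)).trans (isoSphereA hab.symm)

/-- The unit sphere of the new vertex is the suspension of the common-neighbor graph. -/
noncomputable def isoSphereNone (hab : G.Adj a b) :
    (edgeSubdivision G a b).induce
        ((edgeSubdivision G a b).neighborSet (none : Option V)) ≃g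
      susp (G.induce {c : V | G.Adj a c ∧ G.Adj b c}) := by
  classical
  have hne : a ≠ b := hab.ne
  refine mkIso (fun p => ?_) (fun q => ?_) ?_ ?_ ?_
  · exact match p with
    | ⟨none, h⟩ => absurd (h : False) id
    | ⟨some c, h⟩ =>
      if hca : c = a then none else if hcb : c = b then some none else
        some (some ⟨c, by
          obtain (h | h | h) : c = a ∨ c = b ∨ (G.Adj a c ∧ G.Adj b c) := h
          · exact absurd h hca
          · exact absurd h hcb
          · exact h⟩)
  · exact match q with
    | none => ⟨some a, (Or.inl rfl : a = a ∨ _ ∨ _)⟩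
    | some none => ⟨some b, (Or.inr (Or.inl rfl) : _ ∨ b = b ∨ _)⟩
    | some (some ⟨c, hc⟩) => ⟨some c, (Or.inr (Or.inr hc) : _ ∨ _ ∨ _)⟩
  · rintro ⟨(_ | c), h⟩
    · exact absurd (h : False) id
    · by_cases hca : c = a
      · subst hca; simp
      · by_cases hcb : c = b
        · subst hcb; simp [hca]
        · simp [hca, hcb]
  · rintro (_ | (_ | ⟨c, hc⟩))
    · simp
    · simp [hne.symm]
    · have hca : c ≠ a := fun hc' => G.loopless.irrefl a (hc' ▸ hc.1)
      have hcb : c ≠ b := fun hc' => G.loopless.irrefl b (hc' ▸ hc.2)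
      simp [hca, hcb]
  · rintro ⟨(_ | c), hc⟩ ⟨(_ | c'), hc'⟩
    · exact absurd (hc : False) id
    · exact absurd (hc : False) id
    · exact absurd (hc' : False) id
    · -- some c, some c'
      have hIc : c = a ∨ c = b ∨ (G.Adj a c ∧ G.Adj b c) := hc
      have hIc' : c' = a ∨ c' = b ∨ (G.Adj a c' ∧ G.Adj b c') := hc'
      by_cases h1 : c = a
      · by_cases h2 : c' = a
        · -- a, a
          simp only [dif_pos h1, dif_pos h2]
          constructor
          · rintro ⟨q1, q2⟩
            rw [h1, h2] at q1
            exact absurd q1 (G.loopless.irrefl a)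
          · intro h
            exact (h : False).elim
        · by_cases h4 : c' = b
          · -- a, b
            simp only [dif_pos h1, dif_neg h2, dif_pos h4]
            constructor
            · rintro ⟨q1, q2⟩
              exact absurd (Or.inl ⟨h1, h4⟩) q2
            · intro h
              exact (h : False).elim
          · -- a, other
            simp only [dif_pos h1, dif_neg h2, dif_neg h4]
            have hI : G.Adj a c' ∧ G.Adj b c' :=
              hIc'.elim (fun q => absurd q h2) (fun q => q.elim (fun q => absurd q h4) id)
            constructor
            · intro _; trivial
            · intro _
              refine ⟨?_, ?_⟩
              · rw [h1]; exact hI.1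
              · rintro (⟨q1, q2⟩ | ⟨q1, q2⟩)
                · exact h4 q2
                · exact hne (h1 ▸ q1 : a = b)
      · by_cases h3 : c = b
        · by_cases h2 : c' = a
          · -- b, a
            simp only [dif_neg h1, dif_pos h3, dif_pos h2]
            constructor
            · rintro ⟨q1, q2⟩
              exact absurd (Or.inr ⟨h3, h2⟩) q2
            · intro h
              exact (h : False).elim
          · by_cases h4 : c' = b
            · -- b, b
              simp only [dif_neg h1, dif_pos h3, dif_neg h2, dif_pos h4]
              constructor
              · rintro ⟨q1, q2⟩
                rw [h3, h4] at q1
                exact absurd q1 (G.loopless.irrefl b)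
              · intro h
                exact (h : False).elim
            · -- b, other
              simp only [dif_neg h1, dif_pos h3, dif_neg h2, dif_neg h4]
              have hI : G.Adj a c' ∧ G.Adj b c' :=
                hIc'.elim (fun q => absurd q h2) (fun q => q.elim (fun q => absurd q h4) id)
              constructor
              · intro _; trivial
              · intro _
                refine ⟨?_, ?_⟩
                · rw [h3]; exact hI.2
                · rintro (⟨q1, q2⟩ | ⟨q1, q2⟩)
                  · exact h1 q1
                  · exact h2 q2
        · -- c other
          have hI : G.Adj a c ∧ G.Adj b c :=
            hIc.elim (fun q => absurd q h1) (fun q => q.elim (fun q => absurd q h3) id)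
          by_cases h2 : c' = a
          · -- other, a
            simp only [dif_neg h1, dif_neg h3, dif_pos h2]
            constructor
            · intro _; trivial
            · intro _
              refine ⟨?_, ?_⟩
              · rw [h2]; exact hI.1.symm
              · rintro (⟨q1, q2⟩ | ⟨q1, q2⟩)
                · exact h1 q1
                · exact h3 q1
          · by_cases h4 : c' = b
            · -- other, b
              simp only [dif_neg h1, dif_neg h3, dif_neg h2, dif_pos h4]
              constructor
              · intro _; trivial
              · intro _
                refine ⟨?_, ?_⟩
                · rw [h4]; exact hI.2.symm
                · rintro (⟨q1, q2⟩ | ⟨q1, q2⟩)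
                  · exact h1 q1
                  · exact h3 q1
            · -- other, other
              simp only [dif_neg h1, dif_neg h3, dif_neg h2, dif_neg h4]
              constructor
              · rintro ⟨q1, q2⟩
                exact (q1 : G.Adj c c')
              · intro h
                refine ⟨(h : G.Adj c c'), ?_⟩
                rintro (⟨q1, q2⟩ | ⟨q1, q2⟩)
                · exact h1 q1
                · exact h3 q1

/-- The common-neighbor graph is the unit sphere of `b` inside the unit sphere of `a`. -/
def isoCommon (hab : G.Adj a b) :
    (G.induce (G.neighborSet a)).induce
        ((G.induce (G.neighborSet a)).neighborSet ⟨b, hab⟩) ≃g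
      G.induce {c : V | G.Adj a c ∧ G.Adj b c} := by
  refine mkIso (fun p => ?_) (fun q => ?_) ?_ ?_ ?_
  · exact match p with
    | ⟨⟨c, hc⟩, hc'⟩ => ⟨c, ⟨hc, (hc' : G.Adj b c)⟩⟩
  · exact match q with
    | ⟨c, hc⟩ => ⟨⟨c, hc.1⟩, (hc.2 : G.Adj b c)⟩
  · rintro ⟨⟨c, hc⟩, hc'⟩; rfl
  · rintro ⟨c, hc⟩; rfl
  · rintro ⟨⟨c, hc⟩, hc'⟩ ⟨⟨d, hd⟩, hd'⟩
    exact Iff.rfl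

end SubIsos3

section SubContr

variable {V : Type u}

/-- Deleting the endpoint `a` from a subdivision is contractible, provided deleting `a`
from the original graph is. -/
theorem contractible_subdivision_delA [Finite V] {X : SimpleGraph V} {a b : V}
    (hab : X.Adj a b) (hD : GraphContractible (X.induce {y : V | y ≠ a})) :
    GraphContractible ((edgeSubdivision X a b).induce {y : Option V | y ≠ some a}) := by
  classical
  have hne : a ≠ b := hab.ne
  refine GraphContractible.step _ ⟨none, fun hc => Option.some_ne_none _ hc.symm⟩ ?_ ?_
  · -- unit sphere of the new vertex after deleting `a` : `b` is universal
    refine contractible_of_universal' _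
      ⟨⟨some b, fun hc => hne (Option.some.inj hc).symm⟩,
        (Or.inr (Or.inl rfl) : b = a ∨ b = b ∨ _)⟩ ?_
    rintro ⟨⟨(_ | c), hy⟩, hadj⟩ hnev
    · exact absurd (hadj : False) id
    · have hca : c ≠ a := fun hc => hy (congrArg some hc)
      obtain (h | h | h) : c = a ∨ c = b ∨ (X.Adj a c ∧ X.Adj b c) :=
        (hadj : (edgeSubdivision X a b).Adj none (some c))
      · exact absurd h hca
      · exact absurd (Subtype.ext (Subtype.ext (congrArg some h.symm))) hnev.symm
      · exact (⟨h.2, by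
          rintro (⟨q1, q2⟩ | ⟨q1, q2⟩)
          · exact hne.symm q1
          · exact hca q2⟩ :
          X.Adj b c ∧ ¬((b = a ∧ c = b) ∨ (b = b ∧ c = a)))
  · -- deleting the new vertex as well leaves `X` minus `a`
    refine contractible_of_iso hD ((mkIso (fun p => ?_) (fun q => ?_) ?_ ?_ ?_).symm)
    · exact match p with
      | ⟨⟨none, hy⟩, hq⟩ => absurd (Subtype.ext rfl) hq
      | ⟨⟨some c, hy⟩, hq⟩ => ⟨c, fun hc => hy (congrArg some hc)⟩
    · exact ⟨⟨some (q : V), fun hc => q.2 (Option.some.inj hc)⟩,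
        fun hc => Option.some_ne_none _ (congrArg Subtype.val hc)⟩
    · rintro ⟨⟨(_ | c), hy⟩, hq⟩
      · exact absurd (Subtype.ext rfl) hq
      · rfl
    · rintro ⟨c, hc⟩; rfl
    · rintro ⟨⟨(_ | c), hy⟩, hq⟩ ⟨⟨(_ | c'), hy'⟩, hq'⟩
      · exact absurd (Subtype.ext rfl) hq
      · exact absurd (Subtype.ext rfl) hq
      · exact absurd (Subtype.ext rfl) hq'
      · have hca : c ≠ a := fun hc => hy (congrArg some hc)
        have hca' : c' ≠ a := fun hc => hy' (congrArg some hc)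
        constructor
        · intro h
          exact ((h : X.Adj c c' ∧ ¬(_ ∨ _)).1 : X.Adj c c')
        · intro h
          exact (⟨(h : X.Adj c c'), by
            rintro (⟨q1, q2⟩ | ⟨q1, q2⟩)
            · exact hca q1
            · exact hca' q2⟩ :
            X.Adj c c' ∧ ¬((c = a ∧ c' = b) ∨ (c = b ∧ c' = a)))

/-- Subdividing at an endpoint whose sphere and deletion are contractible. -/
theorem contractible_subdivision_endpoint [Finite V] {X : SimpleGraph V} {a b : V}
    (hab : X.Adj a b) (hS : GraphContractible (X.induce (X.neighborSet a)))
    (hD : GraphContractible (X.induce {y : V | y ≠ a})) :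
    GraphContractible (edgeSubdivision X a b) :=
  GraphContractible.step _ (some a)
    (contractible_of_iso hS (isoSphereA hab).symm)
    (contractible_subdivision_delA hab hD)

/-- Subdivision of a contractible graph at an edge is contractible. -/
theorem contractible_subdivision : ∀ {V : Type u} {X : SimpleGraph V},
    GraphContractible X → ∀ (_ : Finite V) {a b : V}, X.Adj a b →
    GraphContractible (edgeSubdivision X a b) := by
  intro V X h
  induction h with
  | @point V' X h1 h2 =>
    intro _ a b hab
    exact absurd ((h2.allEq a b) ▸ hab) (X.loopless.irrefl b)
  | @step V' X x hS hD ihS ihD =>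
    intro hfin a b hab
    haveI : Finite V' := hfin
    by_cases hxa : x = a
    · subst hxa
      exact contractible_subdivision_endpoint hab hS hD
    · by_cases hxb : x = b
      · subst hxb
        have h' : GraphContractible (edgeSubdivision X x a) :=
          contractible_subdivision_endpoint hab.symm hS hD
        exact contractible_of_iso h' (subSymm X x a)
      · refine GraphContractible.step _ (some x) ?_ ?_
        · by_cases hI : X.Adj a x ∧ X.Adj b x
          · have hadj : (X.induce (X.neighborSet x)).Adj ⟨a, hI.1.symm⟩ ⟨b, hI.2.symm⟩ := hab
            exact contractible_of_iso (ihS inferInstance hadj) (isoSphereI x hI.1 hI.2).symm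
          · exact contractible_of_iso hS
              (isoSphereOther x (fun hc => hxa hc) (fun hc => hxb hc) hI).symm
        · have hadj : (X.induce {y : V' | y ≠ x}).Adj
              ⟨a, fun hc => hxa hc.symm⟩ ⟨b, fun hc => hxb hc.symm⟩ := hab
          exact contractible_of_iso (ihD inferInstance hadj)
            (isoDelete x (fun hc => hxa hc.symm) (fun hc => hxb hc.symm)).symm

/-- Main part 1: subdivision of a sphere is a sphere. -/
theorem isSphere_subdivision : ∀ {d : ℤ} {V : Type u} {G : SimpleGraph V},
    IsSphere d G → ∀ (_ : Finite V) {a b : V}, G.Adj a b →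
    IsSphere d (edgeSubdivision G a b) := by
  intro d V G h
  induction h with
  | @empty V' G he =>
    intro _ a b hab
    exact (he.elim a)
  | @step d' hd V' G hne hS hx ihS =>
    intro hfin a b hab
    haveI : Finite V' := hfin
    refine IsSphere.step hd _ ⟨none⟩ (fun x => ?_) ?_
    · obtain (_ | c) := x
      · -- the new vertex: suspension of the common-neighbor sphere
        have h1 := sphere_unitSphere (hS a) ⟨b, hab⟩
        have h2 : IsSphere (d' - 1 - 1) (G.induce {c : V' | G.Adj a c ∧ G.Adj b c}) :=
          isSphere_of_iso h1 (isoCommon hab)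
        have h3 := isSphere_susp h2 inferInstance
        have heq : d' - 1 - 1 + 1 = d' - 1 := by ring
        rw [heq] at h3
        exact isSphere_of_iso h3 (isoSphereNone hab).symm
      · by_cases hca : c = a
        · subst hca
          exact isSphere_of_iso (hS c) (isoSphereA hab).symm
        · by_cases hcb : c = b
          · subst hcb
            exact isSphere_of_iso (hS c) (isoSphereB hab).symm
          · by_cases hI : G.Adj a c ∧ G.Adj b c
            · have hadj : (G.induce (G.neighborSet c)).Adj ⟨a, hI.1.symm⟩ ⟨b, hI.2.symm⟩ := hab
              exact isSphere_of_iso (ihS c inferInstance hadj) (isoSphereI c hI.1 hI.2).symm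
            · exact isSphere_of_iso (hS c) (isoSphereOther c hca hcb hI).symm
    · obtain ⟨x₀, hx₀⟩ := hx
      by_cases hxa : x₀ = a
      · subst hxa
        exact ⟨some x₀, contractible_subdivision_delA hab hx₀⟩
      · by_cases hxb : x₀ = b
        · subst hxb
          refine ⟨some x₀, ?_⟩
          have h' : GraphContractible ((edgeSubdivision G x₀ a).induce
              {y : Option V' | y ≠ some x₀}) := contractible_subdivision_delA hab.symm hx₀
          refine contractible_of_iso h' (isoInduce (subSymm G x₀ a) _ _ (fun v => ?_))
          exact Iff.rfl
        · refine ⟨some x₀, ?_⟩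
          have hadj : (G.induce {y : V' | y ≠ x₀}).Adj
              ⟨a, fun hc => hxa hc.symm⟩ ⟨b, fun hc => hxb hc.symm⟩ := hab
          exact contractible_of_iso (contractible_subdivision hx₀ inferInstance hadj)
            (isoDelete x₀ (fun hc => hxa hc.symm) (fun hc => hxb hc.symm)).symm

end SubContr

section Homotopy

variable {V : Type u}

/-- The closed common neighborhood of the edge `(a,b)`. -/
def setA (G : SimpleGraph V) (a b : V) : Set V :=
  {v | v = a ∨ v = b ∨ (G.Adj a v ∧ G.Adj b v)}

/-- Cone set for the second expansion. -/
def setB (G : SimpleGraph V) (a b : V) : Set (Option V) :=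
  {x | match x with
       | none => True
       | some c => c = b ∨ (G.Adj b c ∧ c ≠ a)}

/-- Cone set for the expansion on the subdivision side. -/
def setC (G : SimpleGraph V) (b : V) : Set (Option V) :=
  {x | match x with
       | none => True
       | some c => c = b ∨ G.Adj b c}

variable {G : SimpleGraph V} {a b : V}

theorem contr_setA [Finite V] (hab : G.Adj a b) :
    GraphContractible (G.induce (setA G a b)) := by
  refine contractible_of_universal' _ ⟨a, Or.inl rfl⟩ ?_
  rintro ⟨v, hv⟩ hne
  obtain (h | h | h) := hv
  · exact absurd (Subtype.ext h) hne
  · exact (h ▸ hab : G.Adj a v)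
  · exact h.1

theorem contr_setB [Finite V] (hab : G.Adj a b) :
    GraphContractible ((addCone G (setA G a b)).induce (setB G a b)) := by
  refine contractible_of_universal' _ ⟨some b, Or.inl rfl⟩ ?_
  rintro ⟨(_ | c), hc⟩ hne
  · exact (Or.inr (Or.inl rfl) : b = a ∨ b = b ∨ _)
  · obtain (h | h) := hc
    · exact absurd (Subtype.ext (congrArg some h.symm)) hne.symm
    · exact (h.1 : G.Adj b c)

theorem contr_setC [Finite V] (hab : G.Adj a b) :
    GraphContractible ((edgeSubdivision G a b).induce (setC G b)) := by
  have hne : a ≠ b := hab.ne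
  refine GraphContractible.step _ ⟨some a, Or.inr hab.symm⟩ ?_ ?_
  · -- unit sphere of `a` inside `C` : the new vertex is universal
    refine contractible_of_universal' _ ⟨⟨none, trivial⟩, (Or.inl rfl : a = a ∨ _ ∨ _)⟩ ?_
    rintro ⟨⟨(_ | c), hy⟩, hadj⟩ hnev
    · exact absurd (Subtype.ext (Subtype.ext rfl)) hnev
    · have h1 : G.Adj a c ∧ ¬((a = a ∧ c = b) ∨ (a = b ∧ c = a)) := hadj
      have hcb : c ≠ b := fun hc => h1.2 (Or.inl ⟨rfl, hc⟩)
      obtain (h | h) := hy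
      · exact absurd h hcb
      · exact (Or.inr (Or.inr ⟨h1.1, h⟩) : c = a ∨ c = b ∨ (G.Adj a c ∧ G.Adj b c))
  · -- deletion of `a` from `C` : `b` is universal
    refine contractible_of_universal' _
      ⟨⟨some b, Or.inl rfl⟩, fun hc => hne.symm
        (Option.some.inj (congrArg Subtype.val hc))⟩ ?_
    rintro ⟨⟨(_ | c), hy⟩, hnea⟩ hnev
    · exact (Or.inr (Or.inl rfl) : b = a ∨ b = b ∨ _)
    · have hca : c ≠ a := fun hc =>
        hnea (Subtype.ext (congrArg some hc))
      obtain (h | h) := hy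
      · exact absurd (Subtype.ext (Subtype.ext (congrArg some h.symm))) hnev.symm
      · exact (⟨h, by
          rintro (⟨q1, q2⟩ | ⟨q1, q2⟩)
          · exact hne.symm q1
          · exact hca q2⟩ :
          G.Adj b c ∧ ¬((b = a ∧ c = b) ∨ (b = b ∧ c = a)))

/-- The key isomorphism between the two expanded graphs. -/
noncomputable def isoConeCone (hab : G.Adj a b) :
    addCone (edgeSubdivision G a b) (setC G b) ≃g
      addCone (addCone G (setA G a b)) (setB G a b) := by
  classical
  have hne : a ≠ b := hab.ne
  refine mkIso (fun p => ?_) (fun p => ?_) ?_ ?_ ?_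
  · exact match p with
    | none => some (some b)
    | some none => some none
    | some (some c) => if c = b then none else some (some c)
  · exact match p with
    | none => some (some b)
    | some none => some none
    | some (some c) => if c = b then none else some (some c)
  · rintro (_ | (_ | c))
    · simp
    · rfl
    · by_cases hcb : c = b
      · subst hcb; simp
      · simp [hcb]
  · rintro (_ | (_ | c))
    · simp
    · rfl
    · by_cases hcb : c = b
      · subst hcb; simp
      · simp [hcb]
  · rintro (_ | (_ | c)) (_ | (_ | c'))
    · -- none, none
      constructor
      · exact fun h => (h : False).elim
      · intro h; exact absurd (h : G.Adj b b) (G.loopless.irrefl b)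
    · -- none, some none
      constructor
      · intro _; exact (Or.inr (Or.inl rfl) : b = a ∨ b = b ∨ _)
      · intro _; exact trivial
    · -- none, some (some c')
      by_cases hcb : c' = b
      · subst hcb
        simp only [if_pos rfl]
        constructor
        · intro _; exact (Or.inl rfl : c' = c' ∨ _)
        · intro _; exact (Or.inl rfl : c' = c' ∨ _)
      · simp only [if_neg hcb]
        constructor
        · intro h
          obtain (h | h) : c' = b ∨ G.Adj b c' := h
          · exact absurd h hcb
          · exact (h : G.Adj b c')
        · intro h
          exact (Or.inr (h : G.Adj b c') : c' = b ∨ G.Adj b c')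
    · -- some none, none
      constructor
      · intro _; exact (Or.inr (Or.inl rfl) : b = a ∨ b = b ∨ _)
      · intro _; trivial
    · -- some none, some none
      exact Iff.rfl
    · -- some none, some (some c')
      by_cases hcb : c' = b
      · subst hcb
        simp only [if_pos rfl]
        constructor
        · intro _; trivial
        · intro _
          exact (Or.inr (Or.inl rfl) : c' = a ∨ c' = c' ∨ _)
      · simp only [if_neg hcb]
        exact Iff.rfl
    · -- some (some c), none
      by_cases hcb : c = b
      · subst hcb
        simp only [if_pos rfl]
        constructor
        · intro _; exact (Or.inl rfl : c = c ∨ _)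
        · intro _; exact (Or.inl rfl : c = c ∨ _)
      · simp only [if_neg hcb]
        constructor
        · intro h
          obtain (h | h) : c = b ∨ G.Adj b c := h
          · exact absurd h hcb
          · exact (h.symm : G.Adj c b)
        · intro h
          exact (Or.inr (h : G.Adj c b).symm : c = b ∨ G.Adj b c)
    · -- some (some c), some none
      by_cases hcb : c = b
      · subst hcb
        simp only [if_pos rfl]
        constructor
        · intro _; trivial
        · intro _
          exact (Or.inr (Or.inl rfl) : c = a ∨ c = c ∨ _)
      · simp only [if_neg hcb]
        exact Iff.rfl
    · -- some some, some some
      by_cases hcb : c = b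
      · by_cases hcb' : c' = b
        · simp only [if_pos hcb, if_pos hcb']
          constructor
          · rintro ⟨q1, q2⟩
            rw [hcb, hcb'] at q1
            exact absurd q1 (G.loopless.irrefl b)
          · intro h; exact (h : False).elim
        · simp only [if_pos hcb, if_neg hcb']
          constructor
          · rintro ⟨q1, q2⟩
            refine (Or.inr ⟨?_, ?_⟩ : c' = b ∨ (G.Adj b c' ∧ c' ≠ a))
            · rw [← hcb]; exact q1
            · intro hc'a
              exact q2 (Or.inr ⟨hcb, hc'a⟩)
          · rintro (h | h)
            · exact absurd h hcb'
            · refine (⟨?_, ?_⟩ : G.Adj c c' ∧ ¬((c = a ∧ c' = b) ∨ (c = b ∧ c' = a)))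
              · rw [hcb]; exact h.1
              · rintro (⟨q1, q2⟩ | ⟨q1, q2⟩)
                · exact hcb' q2
                · exact h.2 q2
      · by_cases hcb' : c' = b
        · simp only [if_neg hcb, if_pos hcb']
          constructor
          · rintro ⟨q1, q2⟩
            refine (Or.inr ⟨?_, ?_⟩ : c = b ∨ (G.Adj b c ∧ c ≠ a))
            · rw [← hcb']; exact q1.symm
            · intro hca
              exact q2 (Or.inl ⟨hca, hcb'⟩)
          · rintro (h | h)
            · exact absurd h hcb
            · refine (⟨?_, ?_⟩ : G.Adj c c' ∧ ¬((c = a ∧ c' = b) ∨ (c = b ∧ c' = a)))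
              · rw [hcb']; exact h.1.symm
              · rintro (⟨q1, q2⟩ | ⟨q1, q2⟩)
                · exact h.2 q1
                · exact hcb q1
        · simp only [if_neg hcb, if_neg hcb']
          constructor
          · rintro ⟨q1, q2⟩
            exact (q1 : G.Adj c c')
          · intro h
            exact (⟨(h : G.Adj c c'), by
              rintro (⟨q1, q2⟩ | ⟨q1, q2⟩)
              · exact hcb' q2
              · exact hcb q1⟩ :
              G.Adj c c' ∧ ¬((c = a ∧ c' = b) ∨ (c = b ∧ c' = a)))

/-- Part 2: the subdivision is homotopic to the original graph. -/
theorem homotopic_subdivision [Finite V] (hab : G.Adj a b) :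
    Homotopic (edgeSubdivision G a b) G := by
  have h1 : Homotopic (edgeSubdivision G a b)
      (addCone (edgeSubdivision G a b) (setC G b)) :=
    Homotopic.expand _ _ (contr_setC hab)
  have h2 : Homotopic (addCone (edgeSubdivision G a b) (setC G b))
      (addCone (addCone G (setA G a b)) (setB G a b)) :=
    Homotopic.of_iso _ _ ⟨isoConeCone hab⟩
  have h3 : Homotopic (addCone G (setA G a b))
      (addCone (addCone G (setA G a b)) (setB G a b)) :=
    Homotopic.expand _ _ (contr_setB hab)
  have h4 : Homotopic G (addCone G (setA G a b)) :=
    Homotopic.expand _ _ (contr_setA hab)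
  exact Homotopic.trans _ _ _ h1 (Homotopic.trans _ _ _ h2
    (Homotopic.trans _ _ _ (Homotopic.symm _ _ h3) (Homotopic.symm _ _ h4)))

end Homotopy

section Collapse

variable {V : Type u} {G : SimpleGraph V} {a b : V}

/-- Collapsing the edge from `a` to the new vertex recovers the original graph. -/
noncomputable def isoCollapse (hab : G.Adj a b) :
    edgeCollapse (edgeSubdivision G a b) (some a) none ≃g G := by
  classical
  refine mkIso (fun p => ?_) (fun x => ?_) ?_ ?_ ?_
  · exact match p with
    | ⟨some x, _⟩ => x
    | ⟨none, h⟩ => absurd rfl h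
  · exact ⟨some x, fun hc => Option.some_ne_none _ hc⟩
  · rintro ⟨(_ | x), hx⟩
    · exact absurd rfl hx
    · rfl
  · intro x; rfl
  · rintro ⟨(_ | x), hx⟩ ⟨(_ | y), hy⟩
    · exact absurd rfl hx
    · exact absurd rfl hx
    · exact absurd rfl hy
    · constructor
      · rintro ⟨hne', hor⟩
        have hxy : x ≠ y := fun hc => hne' (Subtype.ext (congrArg some hc))
        obtain (h | ⟨h1, h2⟩ | ⟨h1, h2⟩) := hor
        · exact ((h : G.Adj x y ∧ ¬(_ ∨ _)).1 : G.Adj x y)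
        · have hxa : x = a := Option.some.inj h1
          obtain (h | h | h) : y = a ∨ y = b ∨ (G.Adj a y ∧ G.Adj b y) := h2
          · exact absurd (hxa.trans h.symm) hxy
          · show G.Adj x y; rw [hxa, h]; exact hab
          · show G.Adj x y; rw [hxa]; exact h.1
        · have hya : y = a := Option.some.inj h1
          obtain (h | h | h) : x = a ∨ x = b ∨ (G.Adj a x ∧ G.Adj b x) := h2
          · exact absurd (h.trans hya.symm) hxy
          · show G.Adj x y; rw [hya, h]; exact hab.symm
          · show G.Adj x y; rw [hya]; exact h.1.symm
      · intro h
        have h' : G.Adj x y := h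
        have hxy : x ≠ y := G.ne_of_adj h'
        refine ⟨fun hc => hxy (Option.some.inj (congrArg Subtype.val hc)), ?_⟩
        by_cases hp : x = a ∧ y = b
        · refine Or.inr (Or.inl ⟨congrArg some hp.1, ?_⟩)
          exact (Or.inr (Or.inl hp.2) : y = a ∨ y = b ∨ _)
        · by_cases hp2 : x = b ∧ y = a
          · refine Or.inr (Or.inr ⟨congrArg some hp2.2, ?_⟩)
            exact (Or.inr (Or.inl hp2.1) : x = a ∨ x = b ∨ _)
          · exact Or.inl (⟨h', fun hc => hc.elim hp hp2⟩ :
              G.Adj x y ∧ ¬((x = a ∧ y = b) ∨ (x = b ∧ y = a)))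

end Collapse

/-- Edge subdivision of a `d`-sphere (`d ≥ 2`) yields again a `d`-sphere, homotopic to
the original graph, and the original graph is recovered by an edge collapse. -/
theorem edgeSubdivision_isSphere_homotopic_collapse {V : Type} [Fintype V]
    (d : ℕ) (hd : 2 ≤ d) (G : SimpleGraph V) (hG : IsSphere (d : ℤ) G)
    (a b : V) (hab : G.Adj a b) :
    IsSphere (d : ℤ) (edgeSubdivision G a b) ∧
      Homotopic (edgeSubdivision G a b) G ∧
      ∃ u w : Option V, (edgeSubdivision G a b).Adj u w ∧
        Nonempty ((edgeCollapse (edgeSubdivision G a b) u w) ≃g G) := by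
  refine ⟨isSphere_subdivision hG inferInstance hab, homotopic_subdivision hab,
    some a, none, (Or.inl rfl : a = a ∨ _ ∨ _), ⟨isoCollapse hab⟩⟩
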